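/- Let $\Omega \subseteq \mathbb{R}^d$ be a closed convex set with diameter $D$ (i.e., $\|x - y\| \leq D$ for all $x,y \in \Omega$). Let $x_1, \ldots, x_{T+1} \in \Omega$, $g_1, \ldots, g_T \in \mathbb{R}^d$ with $\|g_t\| \leq G$, $\eta_t = \eta_1 / \sqrt{t}$ with $\eta_1 > 0$, and suppose $x_{t+1}$ is the Euclidean projection onto $\Omega$ of $x_t - \eta_t g_t$. Then with weights $w_t = t^\alpha$ ($\alpha \geq 0$): $\sum_{t=1}^{T} w_t \langle g_t, x_t - x_* \rangle \leq \frac{T^{\alpha + 1/2}}{2\eta_1} D^2 + \frac{\eta_1 G^2}{2} \sum_{t=1}^T t^{\alpha - 1/2}$ for any $x_* \in \Omega$. -/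

import Mathlib

open Finset

set_option maxHeartbeats 1000000

lemma abel_aux (c a : ℕ → ℝ) (D2 : ℝ) (hc0 : ∀ t, 0 ≤ c t)
    (hcm : ∀ t, c t ≤ c (t+1)) (ha0 : ∀ t, 0 ≤ a t) (haD : ∀ t, a t ≤ D2) :
    ∀ T, ∑ t ∈ Icc 1 T, c t * (a t - a (t+1)) ≤ c T * D2 - c T * a (T+1) := by
  intro T
  induction T with
  | zero =>
    rw [show Icc 1 0 = (∅ : Finset ℕ) from rfl, sum_empty]
    nlinarith [mul_nonneg (hc0 0) (sub_nonneg.2 (haD 1))]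
  | succ n ih =>
    rw [Finset.sum_Icc_succ_top (by omega : 1 ≤ n + 1)]
    nlinarith [hcm n, ha0 (n+1), ha0 (n+2), haD (n+1), hc0 (n+1), hc0 n,
      mul_nonneg (sub_nonneg.2 (hcm n)) (sub_nonneg.2 (haD (n+1)))]


theorem stmt_9 (d : ℕ) (Ω : Set (EuclideanSpace ℝ (Fin d)))
    (hclosed : IsClosed Ω) (hconv : Convex ℝ Ω)
    (D G η₁ α : ℝ) (hD : 0 ≤ D) (hG : 0 ≤ G) (hη₁ : 0 < η₁) (hα : 0 ≤ α)
    (hdiam : ∀ x ∈ Ω, ∀ y ∈ Ω, ‖x - y‖ ≤ D)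
    (T : ℕ) (hT : 1 ≤ T)
    (x g : ℕ → EuclideanSpace ℝ (Fin d))
    (η : ℕ → ℝ) (hη : ∀ t, 1 ≤ t → η t = η₁ / Real.sqrt t)
    (hxΩ : ∀ t, 1 ≤ t → t ≤ T + 1 → x t ∈ Ω)
    (hgG : ∀ t, 1 ≤ t → t ≤ T → ‖g t‖ ≤ G)
    (hproj : ∀ t, 1 ≤ t → t ≤ T → ∀ y ∈ Ω,
      ‖x (t + 1) - (x t - η t • g t)‖ ≤ ‖y - (x t - η t • g t)‖)
    (xstar : EuclideanSpace ℝ (Fin d)) (hxstar : xstar ∈ Ω) :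
    ∑ t ∈ Icc 1 T, (t : ℝ) ^ α * (inner ℝ (g t) (x t - xstar) : ℝ) ≤
      (T : ℝ) ^ (α + 1 / 2) / (2 * η₁) * D ^ 2 +
      η₁ * G ^ 2 / 2 * ∑ t ∈ Icc 1 T, (t : ℝ) ^ (α - 1 / 2) := by
  set a : ℕ → ℝ := fun t => ‖x (min (max t 1) (T+1)) - xstar‖^2 with ha_def
  set c : ℕ → ℝ := fun t => (t:ℝ)^(α + 1/2) / (2*η₁) with hc_def
  have haeq : ∀ s : ℕ, 1 ≤ s → s ≤ T+1 → a s = ‖x s - xstar‖^2 := by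
    intro s h1 h2
    simp only [ha_def]
    rw [show min (max s 1) (T+1) = s by omega]
  have hc0 : ∀ t, 0 ≤ c t := by
    intro t; simp only [hc_def]; positivity
  have hcm : ∀ t, c t ≤ c (t+1) := by
    intro t; simp only [hc_def]
    have h := Real.rpow_le_rpow (by positivity : (0:ℝ) ≤ (t:ℝ))
      (by push_cast; linarith : (t:ℝ) ≤ ((t+1:ℕ):ℝ)) (by linarith : (0:ℝ) ≤ α+1/2)
    gcongr
  have ha0 : ∀ t, 0 ≤ a t := fun t => by positivity
  have haD : ∀ t, a t ≤ D^2 := by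
    intro t
    have hmem : x (min (max t 1) (T+1)) ∈ Ω := hxΩ _ (by omega) (by omega)
    have := hdiam _ hmem _ hxstar
    simp only [ha_def]
    nlinarith [norm_nonneg (x (min (max t 1) (T+1)) - xstar)]
  have key : ∀ t ∈ Icc 1 T, (t:ℝ)^α * (inner ℝ (g t) (x t - xstar) : ℝ) ≤
      c t * (a t - a (t+1)) + η₁ * G^2 / 2 * (t:ℝ)^(α - 1/2) := by
    intro t ht
    obtain ⟨ht1, htT⟩ := mem_Icc.mp ht
    have hηt : η t = η₁ / Real.sqrt t := hη t ht1
    have hspos : (0:ℝ) < (t:ℝ) := by exact_mod_cast ht1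
    have hst : (1:ℝ) ≤ Real.sqrt t := by
      rw [show (1:ℝ) = Real.sqrt 1 by simp]
      exact Real.sqrt_le_sqrt (by exact_mod_cast ht1)
    have hs0 : (0:ℝ) < Real.sqrt t := lt_of_lt_of_le one_pos hst
    have hηpos : 0 < η t := by rw [hηt]; exact div_pos hη₁ hs0
    have hxt1 : x (t+1) ∈ Ω := hxΩ (t+1) (by omega) (by omega)
    haveI : Nonempty ↑Ω := ⟨⟨xstar, hxstar⟩⟩
    set u := x t - η t • g t with hu
    -- minimality
    have hmin : ‖u - x (t+1)‖ = ⨅ w : Ω, ‖u - w‖ := by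
      apply le_antisymm
      · apply le_ciInf
        intro w
        rw [norm_sub_rev u (x (t+1)), norm_sub_rev u (w:EuclideanSpace ℝ (Fin d))]
        exact hproj t ht1 htT w w.2
      · have hbdd : BddBelow (Set.range fun w : Ω => ‖u - (w : EuclideanSpace ℝ (Fin d))‖) :=
          ⟨0, by rintro b ⟨w, rfl⟩; exact norm_nonneg _⟩
        exact ciInf_le hbdd ⟨x (t+1), hxt1⟩
    have hvar := (norm_eq_iInf_iff_real_inner_le_zero hconv hxt1).mp hmin xstar hxstar
    -- hvar : ⟪u - x (t+1), xstar - x (t+1)⟫ ≤ 0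
    have h1 : ‖x (t+1) - xstar‖^2 ≤ ‖u - xstar‖^2 := by
      have expand := norm_add_sq_real (u - x (t+1)) (x (t+1) - xstar)
      rw [sub_add_sub_cancel] at expand
      have hneg : (inner ℝ (u - x (t+1)) (x (t+1) - xstar) : ℝ) =
          - (inner ℝ (u - x (t+1)) (xstar - x (t+1)) : ℝ) := by
        rw [← inner_neg_right]; congr 1; abel
      nlinarith [sq_nonneg ‖u - x (t+1)‖]
    have h2 : ‖u - xstar‖^2 = ‖x t - xstar‖^2
        - 2 * η t * (inner ℝ (g t) (x t - xstar) : ℝ) + (η t)^2 * ‖g t‖^2 := by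
      have hrw : u - xstar = (x t - xstar) - η t • g t := by rw [hu]; abel
      rw [hrw, norm_sub_sq_real, real_inner_smul_right, real_inner_comm, norm_smul,
        Real.norm_eq_abs, mul_pow, sq_abs]
      ring
    have hA : a t = ‖x t - xstar‖^2 := haeq t ht1 (by omega)
    have hA1 : a (t+1) = ‖x (t+1) - xstar‖^2 := haeq (t+1) (by omega) (by omega)
    have base : 2 * η t * (inner ℝ (g t) (x t - xstar) : ℝ) ≤
        a t - a (t+1) + (η t)^2 * ‖g t‖^2 := by
      rw [hA, hA1]; linarith
    -- coefficient identities
    have hsqrt : Real.sqrt (t:ℝ) = (t:ℝ)^((1:ℝ)/2) := Real.sqrt_eq_rpow _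
    have e1 : (t:ℝ)^α * Real.sqrt t = (t:ℝ)^(α+1/2) := by
      rw [hsqrt, ← Real.rpow_add hspos]
    have e2 : (t:ℝ)^α / Real.sqrt t = (t:ℝ)^(α-1/2) := by
      rw [hsqrt, ← Real.rpow_sub hspos]
    have hta : (0:ℝ) ≤ (t:ℝ)^α := Real.rpow_nonneg hspos.le α
    have hg2 : ‖g t‖^2 ≤ G^2 := by nlinarith [hgG t ht1 htT, norm_nonneg (g t)]
    have h2ηpos : (0:ℝ) < 2 * η t := by linarith
    have step1 : (inner ℝ (g t) (x t - xstar) : ℝ) ≤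
        (a t - a (t+1) + (η t)^2 * ‖g t‖^2) / (2 * η t) := by
      rw [le_div_iff₀ h2ηpos]; nlinarith [base]
    have step2 := mul_le_mul_of_nonneg_left step1 hta
    refine step2.trans ?_
    have eq3 : (t:ℝ)^α * ((a t - a (t+1) + (η t)^2 * ‖g t‖^2) / (2 * η t)) =
        c t * (a t - a (t+1)) + (η₁ * (t:ℝ)^(α-1/2) / 2) * ‖g t‖^2 := by
      have hct : c t = (t:ℝ)^α * Real.sqrt t / (2*η₁) := by
        simp only [hc_def]; rw [e1]
      rw [hct, ← e2, hηt]
      field_simp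
    rw [eq3]
    have : (η₁ * (t:ℝ)^(α-1/2) / 2) * ‖g t‖^2 ≤ (η₁ * (t:ℝ)^(α-1/2) / 2) * G^2 := by
      apply mul_le_mul_of_nonneg_left hg2
      have : (0:ℝ) ≤ (t:ℝ)^(α-1/2) := Real.rpow_nonneg hspos.le _
      positivity
    linarith
  calc ∑ t ∈ Icc 1 T, (t:ℝ)^α * (inner ℝ (g t) (x t - xstar) : ℝ)
      ≤ ∑ t ∈ Icc 1 T, (c t * (a t - a (t+1)) + η₁ * G^2 / 2 * (t:ℝ)^(α - 1/2)) :=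
        Finset.sum_le_sum key
    _ = (∑ t ∈ Icc 1 T, c t * (a t - a (t+1))) +
        η₁ * G^2 / 2 * ∑ t ∈ Icc 1 T, (t:ℝ)^(α - 1/2) := by
        rw [Finset.sum_add_distrib, Finset.mul_sum]
    _ ≤ (T:ℝ)^(α + 1/2) / (2*η₁) * D^2 + η₁ * G^2 / 2 * ∑ t ∈ Icc 1 T, (t:ℝ)^(α - 1/2) := by
        have habel := abel_aux c a (D^2) hc0 hcm ha0 haD T
        have h1 : c T * (D^2) - c T * a (T+1) ≤ c T * D^2 :=
          by nlinarith [mul_nonneg (hc0 T) (ha0 (T+1))]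
        have : c T * D^2 = (T:ℝ)^(α + 1/2) / (2*η₁) * D^2 := by simp [hc_def]
        linarith [habel, h1, this.le, this.ge]
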